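/- If b is odd, then the maximum of G(s+α−1,s) over integer s ∈ {1,…,b+1} equals (1/Γ(α))·Γ(b+3)·Γ((b+1)/2+α)² / ( Γ(b+α+2)·Γ((b+3)/2)² ). -/

import Mathlib

/-- Falling power `x^[y] = Γ(x+1)/Γ(x-y+1)`; it equals 0 when `x-y+1` is a
nonpositive integer since `Real.Gamma` vanishes there (and division by zero is zero). -/
noncomputable def fp (x y : ℝ) : ℝ := Real.Gamma (x + 1) / Real.Gamma (x - y + 1)

/-- The Green function `G(t,s)` of the discrete fractional boundary value problem,
for `t ∈ T_b` (a real number) and an integer `s ∈ {0,1,…,b+1}`. -/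
noncomputable def G (α : ℝ) (b : ℕ) (t : ℝ) (s : ℕ) : ℝ :=
  if (s : ℝ) ≤ t - α + 1 then
    1 / Real.Gamma α *
      (fp t (α - 1) * fp (α + b - s) (α - 1) / fp (α + b + 1) (α - 1) - fp (t - s - 1) (α - 1))
  else
    1 / Real.Gamma α * (fp t (α - 1) * fp (α + b - s) (α - 1) / fp (α + b + 1) (α - 1))

noncomputable def F (α : ℝ) (b : ℕ) (s : ℕ) : ℝ :=
  Real.Gamma ((s : ℝ) + α) * Real.Gamma (α + b + 1 - s) /
    (Real.Gamma ((s : ℝ) + 1) * Real.Gamma ((b : ℝ) + 2 - s))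

lemma F_pos {α : ℝ} {b s : ℕ} (hα : 0 < α) (hs : s ≤ b + 1) : 0 < F α b s := by
  have hsb : (s:ℝ) ≤ (b:ℝ) + 1 := by exact_mod_cast hs
  have h1 : (0:ℝ) < (s:ℝ) + α := by positivity
  have h2 : (0:ℝ) < α + (b:ℝ) + 1 - s := by linarith
  have h3 : (0:ℝ) < (s:ℝ) + 1 := by positivity
  have h4 : (0:ℝ) < (b:ℝ) + 2 - s := by linarith
  exact div_pos (mul_pos (Real.Gamma_pos_of_pos h1) (Real.Gamma_pos_of_pos h2))
    (mul_pos (Real.Gamma_pos_of_pos h3) (Real.Gamma_pos_of_pos h4))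

lemma F_step {α : ℝ} {b s : ℕ} (hα : 0 < α) (hs : s ≤ b) :
    F α b (s+1) * ((α + b - s) * (s + 1)) = F α b s * (((s:ℝ) + α) * ((b:ℝ) + 1 - s)) := by
  have hsb : (s:ℝ) ≤ (b:ℝ) := by exact_mod_cast hs
  have h1 : (0:ℝ) < (s:ℝ) + α := by positivity
  have h2 : (0:ℝ) < α + (b:ℝ) - s := by linarith
  have h3 : (0:ℝ) < (s:ℝ) + 1 := by positivity
  have h4 : (0:ℝ) < (b:ℝ) + 1 - s := by linarith
  simp only [F]
  push_cast
  rw [show (s:ℝ) + 1 + α = ((s:ℝ) + α) + 1 by ring, Real.Gamma_add_one (ne_of_gt h1),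
      show α + (b:ℝ) + 1 - ((s:ℝ) + 1) = α + (b:ℝ) - s by ring,
      show (b:ℝ) + 2 - ((s:ℝ) + 1) = (b:ℝ) + 1 - s by ring,
      Real.Gamma_add_one (ne_of_gt h3),
      show α + (b:ℝ) + 1 - (s:ℝ) = (α + (b:ℝ) - s) + 1 by ring,
      Real.Gamma_add_one (ne_of_gt h2),
      show (b:ℝ) + 2 - (s:ℝ) = ((b:ℝ) + 1 - s) + 1 by ring,
      Real.Gamma_add_one (ne_of_gt h4)]
  have g3 := (Real.Gamma_pos_of_pos h3).ne'
  have g4 := (Real.Gamma_pos_of_pos h4).ne'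
  field_simp

lemma F_step_ge {α : ℝ} {b s : ℕ} (hα : 1 < α) (h : 2*s ≤ b) : F α b s ≤ F α b (s+1) := by
  have hα0 : 0 < α := by linarith
  have hsb : s ≤ b := by omega
  have hsc : 2*(s:ℝ) ≤ (b:ℝ) := by exact_mod_cast h
  have hsbc : (s:ℝ) ≤ (b:ℝ) := by exact_mod_cast hsb
  have hA : (0:ℝ) < (α + b - s) * (s + 1) := by
    have : (0:ℝ) < α + (b:ℝ) - s := by linarith
    positivity
  have hAB : (α + (b:ℝ) - s) * ((s:ℝ) + 1) ≤ ((s:ℝ) + α) * ((b:ℝ) + 1 - s) := by nlinarith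
  have hF := F_pos (b := b) (s := s) hα0 (by omega)
  have key := F_step (b := b) (s := s) hα0 hsb
  have : F α b s * ((α + (b:ℝ) - s) * ((s:ℝ) + 1)) ≤ F α b (s+1) * ((α + b - s) * (s + 1)) := by
    rw [key]
    exact mul_le_mul_of_nonneg_left hAB hF.le
  exact le_of_mul_le_mul_right this hA

lemma F_step_le {α : ℝ} {b s : ℕ} (hα : 1 < α) (hsb : s ≤ b) (h : b ≤ 2*s) :
    F α b (s+1) ≤ F α b s := by
  have hα0 : 0 < α := by linarith
  have hsc : (b:ℝ) ≤ 2*(s:ℝ) := by exact_mod_cast h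
  have hsbc : (s:ℝ) ≤ (b:ℝ) := by exact_mod_cast hsb
  have hA : (0:ℝ) < (α + b - s) * (s + 1) := by
    have : (0:ℝ) < α + (b:ℝ) - s := by linarith
    positivity
  have hAB : ((s:ℝ) + α) * ((b:ℝ) + 1 - s) ≤ (α + (b:ℝ) - s) * ((s:ℝ) + 1) := by nlinarith
  have hF := F_pos (b := b) (s := s) hα0 (by omega)
  have key := F_step (b := b) (s := s) hα0 hsb
  have : F α b (s+1) * ((α + b - s) * (s + 1)) ≤ F α b s * ((α + (b:ℝ) - s) * ((s:ℝ) + 1)) := by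
    rw [key]
    exact mul_le_mul_of_nonneg_left hAB hF.le
  exact le_of_mul_le_mul_right this hA

lemma Gval {α : ℝ} {b s : ℕ} (hα : 0 < α) (hs : s ≤ b + 1) :
    G α b ((s:ℝ) + α - 1) s =
      Real.Gamma ((b:ℝ) + 3) / (Real.Gamma α * Real.Gamma (α + b + 2)) * F α b s := by
  have hsb : (s:ℝ) ≤ (b:ℝ) + 1 := by exact_mod_cast hs
  have g0 : (0:ℝ) < Real.Gamma α := Real.Gamma_pos_of_pos hα
  have g3 : (0:ℝ) < Real.Gamma ((s:ℝ) + 1) := Real.Gamma_pos_of_pos (by positivity)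
  have g4 : (0:ℝ) < Real.Gamma ((b:ℝ) + 2 - s) := Real.Gamma_pos_of_pos (by linarith)
  have g5 : (0:ℝ) < Real.Gamma (α + (b:ℝ) + 2) := Real.Gamma_pos_of_pos (by linarith)
  have g6 : (0:ℝ) < Real.Gamma ((b:ℝ) + 3) := Real.Gamma_pos_of_pos (by positivity)
  simp only [G, fp, F]
  rw [if_pos (by linarith : (s:ℝ) ≤ (s:ℝ) + α - 1 - α + 1)]
  rw [show (s:ℝ) + α - 1 - (s:ℝ) - 1 - (α - 1) + 1 = 0 by ring, Real.Gamma_zero, div_zero,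
      sub_zero,
      show (s:ℝ) + α - 1 + 1 = (s:ℝ) + α by ring,
      show (s:ℝ) + α - 1 - (α - 1) + 1 = (s:ℝ) + 1 by ring,
      show α + (b:ℝ) - (s:ℝ) + 1 = α + (b:ℝ) + 1 - s by ring,
      show α + (b:ℝ) - (s:ℝ) - (α - 1) + 1 = (b:ℝ) + 2 - s by ring,
      show α + (b:ℝ) + 1 + 1 = α + (b:ℝ) + 2 by ring,
      show α + (b:ℝ) + 1 - (α - 1) + 1 = (b:ℝ) + 3 by ring]
  field_simp

/-- If `b` is odd, the maximum of `G(s+α-1,s)` over integer `s ∈ {1,…,b+1}` equals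
`(1/Γ(α))·Γ(b+3)·Γ((b+1)/2+α)² / (Γ(b+α+2)·Γ((b+3)/2)²)`. -/
theorem statement5 (α : ℝ) (b : ℕ) (hα1 : 1 < α) (hα2 : α ≤ 2) (hb : 2 ≤ b)
    (hbo : Odd b) :
    IsGreatest {x : ℝ | ∃ s : ℕ, 1 ≤ s ∧ s ≤ b + 1 ∧ x = G α b ((s : ℝ) + α - 1) s}
      (1 / Real.Gamma α * (Real.Gamma ((b : ℝ) + 3) *
          Real.Gamma (((b : ℝ) + 1) / 2 + α) ^ 2) /
        (Real.Gamma ((b : ℝ) + α + 2) * Real.Gamma (((b : ℝ) + 3) / 2) ^ 2)) := by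
  obtain ⟨k, hk⟩ := hbo
  have hα0 : 0 < α := by linarith
  set m := k + 1 with hm
  have hmb : m ≤ b + 1 := by omega
  have hbk : (b:ℝ) = 2*(k:ℝ)+1 := by rw [hk]; push_cast; ring
  -- the maximum value equals C * F α b m
  have hval : (1 / Real.Gamma α * (Real.Gamma ((b : ℝ) + 3) *
          Real.Gamma (((b : ℝ) + 1) / 2 + α) ^ 2) /
        (Real.Gamma ((b : ℝ) + α + 2) * Real.Gamma (((b : ℝ) + 3) / 2) ^ 2))
      = Real.Gamma ((b:ℝ) + 3) / (Real.Gamma α * Real.Gamma (α + b + 2)) * F α b m := by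
    have g0 : (0:ℝ) < Real.Gamma α := Real.Gamma_pos_of_pos hα0
    have g1 : (0:ℝ) < Real.Gamma ((k:ℝ) + 2) := Real.Gamma_pos_of_pos (by positivity)
    have g2 : (0:ℝ) < Real.Gamma (α + (2*(k:ℝ)+1) + 2) := Real.Gamma_pos_of_pos (by positivity)
    simp only [F, hbk]
    push_cast [hm]
    rw [show (2*(k:ℝ)+1 + 1) / 2 + α = (k:ℝ) + 1 + α by ring,
        show (2*(k:ℝ)+1 + 3) / 2 = (k:ℝ) + 2 by ring,
        show 2*(k:ℝ)+1 + α + 2 = α + (2*(k:ℝ)+1) + 2 by ring,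
        show α + (2*(k:ℝ)+1) + 1 - ((k:ℝ)+1) = (k:ℝ) + 1 + α by ring,
        show (k:ℝ) + 1 + 1 = (k:ℝ) + 2 by ring,
        show 2*(k:ℝ)+1 + 2 - ((k:ℝ)+1) = (k:ℝ) + 2 by ring]
    field_simp
  constructor
  · exact ⟨m, by omega, hmb, by rw [hval, Gval hα0 hmb]⟩
  · rintro x ⟨s, hs1, hs2, rfl⟩
    rw [hval, Gval hα0 hs2]
    have hC : (0:ℝ) ≤ Real.Gamma ((b:ℝ) + 3) / (Real.Gamma α * Real.Gamma (α + b + 2)) := by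
      have g0 : (0:ℝ) < Real.Gamma α := Real.Gamma_pos_of_pos hα0
      have g5 : (0:ℝ) < Real.Gamma (α + (b:ℝ) + 2) := Real.Gamma_pos_of_pos (by positivity)
      have g6 : (0:ℝ) < Real.Gamma ((b:ℝ) + 3) := Real.Gamma_pos_of_pos (by positivity)
      positivity
    refine mul_le_mul_of_nonneg_left ?_ hC
    -- F α b s ≤ F α b m
    rcases le_or_gt s m with hsm | hms
    · have claim : ∀ d, F α b (m - d) ≤ F α b m := by
        intro d
        induction d with
        | zero => simp
        | succ d ih =>
          rcases eq_or_ne (m - (d+1)) (m - d) with he | hne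
          · rw [he]; exact ih
          · have hstep : m - (d+1) + 1 = m - d := by omega
            have h2s : 2 * (m - (d+1)) ≤ b := by omega
            calc F α b (m - (d+1)) ≤ F α b (m - (d+1) + 1) := F_step_ge hα1 h2s
              _ = F α b (m - d) := by rw [hstep]
              _ ≤ F α b m := ih
      have := claim (m - s)
      rwa [show m - (m - s) = s by omega] at this
    · have claim : ∀ d, m + d ≤ b + 1 → F α b (m + d) ≤ F α b m := by
        intro d
        induction d with
        | zero => simp
        | succ d ih =>
          intro hd
          have hsb : m + d ≤ b := by omega
          have h2s : b ≤ 2 * (m + d) := by omega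
          calc F α b (m + (d+1)) = F α b ((m + d) + 1) := by ring_nf
            _ ≤ F α b (m + d) := F_step_le hα1 hsb h2s
            _ ≤ F α b m := ih (by omega)
      have := claim (s - m) (by omega)
      rwa [show m + (s - m) = s by omega] at this
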